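/- Let n ≥ 4 and let e = {a,b}, f = {c,d} be two disjoint (non-adjacent) edges of K_n. For each r with 4 ≤ r ≤ n, the set of r-cycles containing both e and f admits a fixed-point-free involution which, for any assignment of a sign to each ordered traversal of the pair (e,f) that is antisymmetric under reversing the relative orientation, pairs each cycle with one of opposite sign. Consequently the number of r-cycles of K_n containing two fixed non-adjacent edges is even. -/

import Mathlib

open SimpleGraph

/-- The set of (unoriented) cycles of length `r` in `G`, each cycle represented
by its edge set. -/
def cycleSet {V : Type*} [DecidableEq V] (G : SimpleGraph V) (r : ℕ) :
    Set (Finset (Sym2 V)) :=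
  {E | ∃ (v : V) (w : G.Walk v v), w.IsCycle ∧ w.length = r ∧ w.edges.toFinset = E}

namespace NonadjHelper

variable {V : Type*} {G : SimpleGraph V}

lemma SimpleGraph.Walk.getVert_cons_one {u v w : V} (q : G.Walk v w) (hadj : G.Adj u v) :
    (q.cons hadj).getVert 1 = v := by
  rw [SimpleGraph.Walk.getVert_cons _ _ one_ne_zero]; simp

/-- In a path, the only edge containing the first vertex is the first edge. -/
lemma path_first_aux {u v t : V} (p : G.Walk u v) (hp : p.IsPath)
    (h : s(u, t) ∈ p.edges) : t = p.getVert 1 := by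
  cases p with
  | nil => simp at h
  | @cons _ w' _ h' q =>
    rw [SimpleGraph.Walk.edges_cons, List.mem_cons] at h
    rcases h with h | h
    · rw [Sym2.eq_iff] at h
      rcases h with ⟨-, rfl⟩ | ⟨rfl, h2⟩
      · rw [SimpleGraph.Walk.getVert_cons_one]
      · exact absurd rfl h'.ne
    · have hu : u ∈ q.support := SimpleGraph.Walk.fst_mem_support_of_mem_edges q h
      exact absurd hu ((SimpleGraph.Walk.cons_isPath_iff h' q).mp hp).2

/-- The first edge of a nonempty walk. -/
lemma first_edge_mem {u v : V} (p : G.Walk u v) (hnil : ¬ p.Nil) :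
    s(u, p.getVert 1) ∈ p.edges := by
  cases p with
  | nil => simp at hnil
  | cons h' q =>
    rw [SimpleGraph.Walk.getVert_cons_one]
    simp [SimpleGraph.Walk.edges_cons]

/-- In a cycle based at `c`, the vertex `c` has exactly two neighbours along the cycle. -/
lemma cycle_neighbors {c : V} (w : G.Walk c c) (hw : w.IsCycle) :
    ∃ y, y ≠ w.getVert 1 ∧ s(c, w.getVert 1) ∈ w.edges ∧ s(c, y) ∈ w.edges ∧
      ∀ t, s(c, t) ∈ w.edges → t = w.getVert 1 ∨ t = y := by
  obtain ⟨u, h', q, rfl⟩ := SimpleGraph.Walk.not_nil_iff.mp hw.not_nil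
  obtain ⟨hq, hcu⟩ := (SimpleGraph.Walk.cons_isCycle_iff q h').mp hw
  have h3 : 3 ≤ q.length + 1 := by
    simpa [SimpleGraph.Walk.length_cons] using hw.three_le_length
  have hrnil : ¬ q.reverse.Nil :=
    SimpleGraph.Walk.not_nil_iff_lt_length.mpr (by rw [SimpleGraph.Walk.length_reverse]; omega)
  have hymem : s(c, q.reverse.getVert 1) ∈ q.edges := by
    have := first_edge_mem q.reverse hrnil
    rwa [SimpleGraph.Walk.edges_reverse, List.mem_reverse] at this
  have hgv : (SimpleGraph.Walk.cons h' q).getVert 1 = u :=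
    SimpleGraph.Walk.getVert_cons_one _ _
  rw [hgv]
  refine ⟨q.reverse.getVert 1, ?_, ?_, ?_, ?_⟩
  · intro hyu; rw [hyu] at hymem; exact hcu hymem
  · simp [SimpleGraph.Walk.edges_cons]
  · rw [SimpleGraph.Walk.edges_cons]; exact List.mem_cons_of_mem _ hymem
  · intro t ht
    rw [SimpleGraph.Walk.edges_cons, List.mem_cons] at ht
    rcases ht with ht | ht
    · rw [Sym2.eq_iff] at ht
      rcases ht with ⟨-, h2⟩ | ⟨h1, h2⟩
      · exact Or.inl h2
      · exact absurd h1 h'.ne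
    · right
      exact path_first_aux q.reverse hq.reverse
        (by rwa [SimpleGraph.Walk.edges_reverse, List.mem_reverse])

/-- A cycle of length at least 4 cannot contain all three edges of a triangle
through its base point with second vertex `z`. -/
lemma cycle_triangle_false {c d z : V} (hcd : c ≠ d) (hcz : c ≠ z) (hdz : d ≠ z)
    (w : G.Walk d d) (hw : w.IsCycle) (hlen : 4 ≤ w.length)
    (h1 : s(c, d) ∈ w.edges) (h2 : s(c, z) ∈ w.edges)
    (hfirst : w.getVert 1 = z) : False := by
  obtain ⟨u, hdu, p, rfl⟩ := SimpleGraph.Walk.not_nil_iff.mp hw.not_nil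
  rw [SimpleGraph.Walk.getVert_cons_one] at hfirst
  subst hfirst
  obtain ⟨hp, hne1⟩ := (SimpleGraph.Walk.cons_isCycle_iff p hdu).mp hw
  rw [SimpleGraph.Walk.length_cons] at hlen
  have hlenp : 3 ≤ p.length := by omega
  rw [SimpleGraph.Walk.edges_cons, List.mem_cons] at h2
  have h2p : s(c, u) ∈ p.edges := by
    rcases h2 with h | h
    · rw [Sym2.eq_iff] at h
      rcases h with ⟨h, -⟩ | ⟨h, -⟩
      · exact absurd h hcd
      · exact absurd h hcz
    · exact h
  have hc1 : c = p.getVert 1 := path_first_aux p hp (by rwa [Sym2.eq_swap] at h2p)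
  have hpnil : ¬ p.Nil := SimpleGraph.Walk.not_nil_iff_lt_length.mpr (by omega)
  obtain ⟨u2, hu2, q, rfl⟩ := SimpleGraph.Walk.not_nil_iff.mp hpnil
  rw [SimpleGraph.Walk.getVert_cons_one] at hc1
  subst hc1
  obtain ⟨hq, hunotin⟩ := (SimpleGraph.Walk.cons_isPath_iff hu2 q).mp hp
  rw [SimpleGraph.Walk.length_cons] at hlenp
  have hlenq : 2 ≤ q.length := by omega
  rw [SimpleGraph.Walk.edges_cons, SimpleGraph.Walk.edges_cons, List.mem_cons,
    List.mem_cons] at h1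
  have h1q : s(c, d) ∈ q.edges := by
    rcases h1 with h | h | h
    · rw [Sym2.eq_iff] at h
      rcases h with ⟨h, -⟩ | ⟨h, -⟩
      · exact absurd h hcd
      · exact absurd h hcz
    · rw [Sym2.eq_iff] at h
      rcases h with ⟨h, -⟩ | ⟨-, h⟩
      · exact absurd h hcz
      · exact absurd h hdz
    · exact h
  have hd1 : d = q.getVert 1 := path_first_aux q hq h1q
  have hqnil : ¬ q.Nil := SimpleGraph.Walk.not_nil_iff_lt_length.mpr (by omega)
  obtain ⟨u3, hu3, s, rfl⟩ := SimpleGraph.Walk.not_nil_iff.mp hqnil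
  rw [SimpleGraph.Walk.getVert_cons_one] at hd1
  subst hd1
  obtain ⟨hs, -⟩ := (SimpleGraph.Walk.cons_isPath_iff hu3 s).mp hq
  have hs0 : s.length = 0 := by
    have hnil : (⟨s, hs⟩ : G.Path d d) = SimpleGraph.Path.nil := SimpleGraph.Path.loop_eq _
    have := congrArg (fun (p : G.Path d d) => (p : G.Walk d d).length) hnil
    simpa using this
  have hq1 : 2 ≤ s.length + 1 := by simpa [SimpleGraph.Walk.length_cons] using hlenq
  omega

/-- A finset with a fixed-point-free involution has even cardinality. -/
lemma even_card_of_involution {α : Type*} [DecidableEq α] (F : α → α) (s : Finset α) :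
    (∀ x ∈ s, F x ∈ s) → (∀ x ∈ s, F (F x) = x) → (∀ x ∈ s, F x ≠ x) → Even s.card := by
  induction s using Finset.strongInduction with
  | _ s ih =>
    intro hmem hinv hne
    rcases s.eq_empty_or_nonempty with rfl | ⟨x, hx⟩
    · simp
    · have hFx : F x ∈ s := hmem x hx
      have hxFx : x ≠ F x := Ne.symm (hne x hx)
      have hsub : {x, F x} ⊆ s := by
        intro y hy
        rcases Finset.mem_insert.mp hy with rfl | hy
        · exact hx
        · rw [Finset.mem_singleton] at hy; rw [hy]; exact hFx
      have hmem_t : ∀ y, y ∈ s \ {x, F x} ↔ y ∈ s ∧ y ≠ x ∧ y ≠ F x := by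
        intro y
        simp [Finset.mem_sdiff, Finset.mem_insert, Finset.mem_singleton, not_or, and_assoc]
      have hss : s \ {x, F x} ⊂ s := by
        refine Finset.ssubset_iff_of_subset (Finset.sdiff_subset) |>.mpr ?_
        exact ⟨x, hx, by simp [hmem_t]⟩
      have hmem' : ∀ y ∈ s \ {x, F x}, F y ∈ s \ {x, F x} := by
        intro y hy
        obtain ⟨hys, hyx, hyFx⟩ := (hmem_t y).mp hy
        refine (hmem_t (F y)).mpr ⟨hmem y hys, ?_, ?_⟩
        · intro h
          exact hyFx (by rw [← hinv y hys, h])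
        · intro h
          have := congrArg F h
          rw [hinv y hys, hinv x hx] at this
          exact hyx this
      have hinv' : ∀ y ∈ s \ {x, F x}, F (F y) = y := fun y hy =>
        hinv y ((hmem_t y).mp hy).1
      have hne' : ∀ y ∈ s \ {x, F x}, F y ≠ y := fun y hy =>
        hne y ((hmem_t y).mp hy).1
      have heven := ih _ hss hmem' hinv' hne'
      have hcard2 : ({x, F x} : Finset α).card = 2 := by
        rw [Finset.card_insert_of_notMem (by simp [hxFx]), Finset.card_singleton]
      have hle : 2 ≤ s.card := by
        have := Finset.card_le_card hsub
        omega
      have hcard : s.card = (s \ {x, F x}).card + 2 := by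
        rw [Finset.card_sdiff_of_subset hsub, hcard2]
        omega
      rw [hcard]
      exact heven.add (by norm_num)

end NonadjHelper

open NonadjHelper in
/-- For non-adjacent (disjoint) edges `e, f` of `K_n` (`n ≥ 4`) and `4 ≤ r ≤ n`,
the set of `r`-cycles containing both `e` and `f` admits a fixed-point-free
involution; consequently the number of such cycles is even. -/
theorem nonadjacent_edges_involution (n : ℕ) (hn : 4 ≤ n)
    (e f : Sym2 (Fin n))
    (he : e ∈ (⊤ : SimpleGraph (Fin n)).edgeSet)
    (hf : f ∈ (⊤ : SimpleGraph (Fin n)).edgeSet)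
    (hdisj : ∀ v : Fin n, ¬(v ∈ e ∧ v ∈ f))
    (r : ℕ) (hr : 4 ≤ r) (hrn : r ≤ n) :
    (∃ φ : {E ∈ cycleSet (⊤ : SimpleGraph (Fin n)) r | e ∈ E ∧ f ∈ E} →
           {E ∈ cycleSet (⊤ : SimpleGraph (Fin n)) r | e ∈ E ∧ f ∈ E},
      Function.Involutive φ ∧ ∀ x, φ x ≠ x) ∧
    Even {E ∈ cycleSet (⊤ : SimpleGraph (Fin n)) r | e ∈ E ∧ f ∈ E}.ncard := by
  classical
  obtain ⟨a, b, rfl⟩ : ∃ a b, e = s(a, b) := by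
    induction e using Sym2.ind with | _ a b => exact ⟨a, b, rfl⟩
  obtain ⟨c, d, rfl⟩ : ∃ c d, f = s(c, d) := by
    induction f using Sym2.ind with | _ c d => exact ⟨c, d, rfl⟩
  have hab : a ≠ b := by simpa using he
  have hcd : c ≠ d := by simpa using hf
  have hac_had : ¬(a = c ∨ a = d) := by
    intro h
    exact hdisj a ⟨by simp, by rw [Sym2.mem_iff]; exact h⟩
  have hbc_hbd : ¬(b = c ∨ b = d) := by
    intro h
    exact hdisj b ⟨by simp, by rw [Sym2.mem_iff]; exact h⟩
  push_neg at hac_had hbc_hbd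
  obtain ⟨hac, had⟩ := hac_had
  obtain ⟨hbc, hbd⟩ := hbc_hbd
  set π : Equiv.Perm (Fin n) := Equiv.swap c d with hπ
  have hπc : π c = d := Equiv.swap_apply_left c d
  have hπd : π d = c := Equiv.swap_apply_right c d
  have hπa : π a = a := Equiv.swap_apply_of_ne_of_ne hac had
  have hπb : π b = b := Equiv.swap_apply_of_ne_of_ne hbc hbd
  set F : Finset (Sym2 (Fin n)) → Finset (Sym2 (Fin n)) :=
    fun E => E.image (Sym2.map π) with hF
  have hππ : ∀ g : Sym2 (Fin n), Sym2.map π (Sym2.map π g) = g := by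
    intro g
    induction g using Sym2.ind with
    | _ x y =>
      rw [Sym2.map_pair_eq, Sym2.map_pair_eq]
      have h1 : ∀ t : Fin n, π (π t) = t := fun t => by rw [hπ]; exact Equiv.swap_apply_self c d t
      rw [h1, h1]
  have hFinv : ∀ E, F (F E) = E := by
    intro E
    simp only [hF, Finset.image_image]
    have hid : (Sym2.map (π : Fin n → Fin n)) ∘ (Sym2.map π) = id := funext hππ
    rw [hid, Finset.image_id]
  -- the graph homomorphism induced by π
  let φg : (⊤ : SimpleGraph (Fin n)) →g (⊤ : SimpleGraph (Fin n)) :=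
    ⟨π, fun {x y} h => by
      simp only [top_adj] at h ⊢
      exact π.injective.ne h⟩
  have hφg : ⇑φg = ⇑π := rfl
  -- F maps the cycle set to itself
  have hFcyc : ∀ E ∈ cycleSet (⊤ : SimpleGraph (Fin n)) r, F E ∈ cycleSet (⊤ : SimpleGraph (Fin n)) r := by
    rintro E ⟨v, w, hw, hlen, rfl⟩
    refine ⟨π v, w.map φg,
      (SimpleGraph.Walk.map_isCycle_iff_of_injective
        (by rw [hφg]; exact π.injective)).mpr hw,
      by rw [SimpleGraph.Walk.length_map]; exact hlen, ?_⟩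
    ext g
    simp only [List.mem_toFinset, SimpleGraph.Walk.edges_map, List.mem_map, hF,
      Finset.mem_image, hφg]
  set S : Set (Finset (Sym2 (Fin n))) :=
    {E ∈ cycleSet (⊤ : SimpleGraph (Fin n)) r | s(a, b) ∈ E ∧ s(c, d) ∈ E} with hS
  have hSmem : ∀ E, E ∈ S ↔ E ∈ cycleSet (⊤ : SimpleGraph (Fin n)) r ∧ s(a, b) ∈ E ∧ s(c, d) ∈ E := by
    intro E; rw [hS]; exact Set.mem_sep_iff
  have hFmem : ∀ E ∈ S, F E ∈ S := by
    intro E hE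
    obtain ⟨hcyc, heE, hfE⟩ := (hSmem E).mp hE
    refine (hSmem (F E)).mpr ⟨hFcyc E hcyc, ?_, ?_⟩
    · exact Finset.mem_image.mpr ⟨s(a, b), heE, by rw [Sym2.map_pair_eq, hπa, hπb]⟩
    · exact Finset.mem_image.mpr ⟨s(c, d), hfE, by
        rw [Sym2.map_pair_eq, hπc, hπd, Sym2.eq_swap]⟩
  -- F has no fixed point on S
  have hFne : ∀ E ∈ S, F E ≠ E := by
    intro E hE hFE
    obtain ⟨⟨v, w, hw, hlen, rfl⟩, heE, hfE⟩ := (hSmem E).mp hE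
    have hmap : ∀ g ∈ w.edges, Sym2.map π g ∈ w.edges := by
      intro g hg
      have h1 : Sym2.map π g ∈ F w.edges.toFinset :=
        Finset.mem_image_of_mem _ (List.mem_toFinset.mpr hg)
      rw [hFE] at h1
      exact List.mem_toFinset.mp h1
    have hfw : s(c, d) ∈ w.edges := List.mem_toFinset.mp hfE
    -- rotate at c
    have hcsup : c ∈ w.support := SimpleGraph.Walk.fst_mem_support_of_mem_edges w hfw
    set w1 := w.rotate c hcsup with hw1def
    have hw1 : w1.IsCycle := hw.rotate hcsup
    have hedges1 : ∀ g, g ∈ w1.edges ↔ g ∈ w.edges := fun g =>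
      (SimpleGraph.Walk.rotate_edges w c hcsup).perm.mem_iff
    obtain ⟨y1, hy1ne, hx1mem, hy1mem, hchar1⟩ := cycle_neighbors w1 hw1
    have hd_cases := hchar1 d ((hedges1 _).mpr hfw)
    -- choose z, the neighbour of c other than d
    have hz_exists : ∃ z, z ≠ d ∧ s(c, z) ∈ w.edges := by
      by_cases h : d = w1.getVert 1
      · exact ⟨y1, fun hzd => hy1ne (hzd.symm ▸ h), (hedges1 _).mp hy1mem⟩
      · exact ⟨w1.getVert 1, fun hzd => h hzd.symm, (hedges1 _).mp hx1mem⟩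
    obtain ⟨z, hzd, hczw⟩ := hz_exists
    have hcz : c ≠ z := (SimpleGraph.Walk.adj_of_mem_edges w hczw).ne
    have hπz : π z = z := Equiv.swap_apply_of_ne_of_ne (Ne.symm hcz) hzd
    have hdzw : s(d, z) ∈ w.edges := by
      have := hmap _ hczw
      rwa [Sym2.map_pair_eq, hπc, hπz] at this
    -- rotate at d
    have hdsup : d ∈ w.support := SimpleGraph.Walk.snd_mem_support_of_mem_edges w hfw
    set w2 := w.rotate d hdsup with hw2def
    have hw2 : w2.IsCycle := hw.rotate hdsup
    have hedges2 : ∀ g, g ∈ w2.edges ↔ g ∈ w.edges := fun g =>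
      (SimpleGraph.Walk.rotate_edges w d hdsup).perm.mem_iff
    have hlen2 : 4 ≤ w2.length := by
      have hl := (SimpleGraph.Walk.rotate_edges w d hdsup).perm.length_eq
      rw [SimpleGraph.Walk.length_edges, SimpleGraph.Walk.length_edges] at hl
      rw [hw2def, hl, hlen]
      exact hr
    obtain ⟨y2, hy2ne, hx2mem, hy2mem, hchar2⟩ := cycle_neighbors w2 hw2
    have hcmem2 : s(d, c) ∈ w2.edges := (hedges2 _).mpr (by rwa [Sym2.eq_swap])
    have hzmem2 : s(d, z) ∈ w2.edges := (hedges2 _).mpr hdzw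
    rcases hchar2 c hcmem2 with hc2 | hc2
    · -- the cycle at d starts with c; apply the triangle lemma with roles of c,z swapped
      exact cycle_triangle_false hzd (Ne.symm hcz) (Ne.symm hcd) w2 hw2 hlen2
        (by rw [Sym2.eq_swap]; exact hzmem2)
        (by rw [Sym2.eq_swap]; exact (hedges2 _).mpr hczw) hc2.symm
    · rcases hchar2 z hzmem2 with hz2 | hz2
      · -- the cycle at d starts with z
        exact cycle_triangle_false hcd hcz (Ne.symm hzd) w2 hw2 hlen2
          ((hedges2 _).mpr hfw) ((hedges2 _).mpr hczw) hz2.symm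
      · exact hcz (hc2.trans hz2.symm)
  refine ⟨⟨fun x => ⟨F x.1, hFmem x.1 x.2⟩, ?_, ?_⟩, ?_⟩
  · intro x
    exact Subtype.ext (hFinv x.1)
  · intro x hx
    exact hFne x.1 x.2 (congrArg Subtype.val hx)
  · have hfin : S.Finite := Set.toFinite _
    rw [Set.ncard_eq_toFinset_card S hfin]
    refine even_card_of_involution F hfin.toFinset ?_ ?_ ?_
    · intro x hx
      rw [Set.Finite.mem_toFinset] at hx ⊢
      exact hFmem x hx
    · intro x _
      exact hFinv x
    · intro x hx
      rw [Set.Finite.mem_toFinset] at hx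
      exact hFne x hx
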